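/- Let α ∈ (1,2) and let g : [−π, π] → ℝ be an even function which is differentiable on [−π, 0) ∪ (0, π] and satisfies |g'(ω)| ≤ C|ω|^{−α} for all ω ∈ [−π,0) ∪ (0,π], for some constant C > 0. Then ∫_{−π}^{π} cos(ωx) g(ω) dω = O(|x|^{−(2−α)}) as x → ∞; that is, there exist constants C' > 0 and x₀ such that |∫_{−π}^{π} cos(ωx) g(ω) dω| ≤ C' x^{−(2−α)} for all x ≥ x₀. -/

import Mathlib

open Real MeasureTheory Set intervalIntegral Filter

set_option maxHeartbeats 1000000 in
/-- Let `α ∈ (1,2)` and `g : [−π,π] → ℝ` be even, differentiable on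
`[−π,0) ∪ (0,π]` with `|g'(ω)| ≤ C |ω|^{−α}` there.  Then
`∫_{−π}^{π} cos(ωx) g(ω) dω = O(x^{−(2−α)})` as `x → ∞`. -/
theorem stmt_7 (α C : ℝ) (hα1 : 1 < α) (hα2 : α < 2) (hC : 0 < C)
    (g g' : ℝ → ℝ)
    (heven : ∀ ω ∈ Set.Icc (-Real.pi) Real.pi, g (-ω) = g ω)
    (hderiv : ∀ ω ∈ Set.Icc (-Real.pi) Real.pi \ {0},
      HasDerivWithinAt g (g' ω) (Set.Icc (-Real.pi) Real.pi \ {0}) ω)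
    (hbound : ∀ ω ∈ Set.Icc (-Real.pi) Real.pi \ {0}, |g' ω| ≤ C * |ω| ^ (-α)) :
    ∃ C' > 0, ∃ x₀ : ℝ, ∀ x ≥ x₀,
      |∫ ω in (-Real.pi)..Real.pi, Real.cos (ω * x) * g ω| ≤ C' * x ^ (-(2 - α)) := by
  have hπ : (0:ℝ) < π := Real.pi_pos
  have hπ1 : (1:ℝ) < π := by
    have := Real.pi_gt_three; linarith
  set S : Set ℝ := Set.Icc (-π) π \ {0} with hSdef
  have hsub : Set.Ioc 0 π ⊆ S := by
    intro t ht
    exact ⟨⟨by linarith [ht.1], ht.2⟩, by simpa using ne_of_gt ht.1⟩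
  -- extension of g beyond π, linearly
  set G : ℝ → ℝ := fun t => if t < π then g t else g π + g' π * (t - π) with hGdef
  have hGg : ∀ t ≤ π, G t = g t := by
    intro t ht
    rcases lt_or_eq_of_le ht with h | h
    · simp only [hGdef, if_pos h]
    · subst h; simp [hGdef]
  have hG : ∀ t ∈ Set.Ioc 0 π, HasDerivAt G (g' t) t := by
    intro t ht
    rcases lt_or_eq_of_le ht.2 with hlt | heq
    · have h1 : HasDerivAt g (g' t) t := by
        refine (hderiv t (hsub ht)).hasDerivAt ?_
        exact Filter.mem_of_superset (Ioo_mem_nhds ht.1 hlt)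
          (fun y hy => hsub ⟨hy.1, hy.2.le⟩)
      refine h1.congr_of_eventuallyEq ?_
      filter_upwards [Iio_mem_nhds hlt] with y hy
      simp only [hGdef]
      rw [if_pos (show y < π from hy)]
    · subst heq
      have hleft : HasDerivWithinAt G (g' π) (Set.Iic π) π := by
        have h0 : HasDerivWithinAt g (g' π) S π := hderiv π (hsub ⟨hπ, le_refl π⟩)
        have h1 : HasDerivWithinAt g (g' π) (Set.Iic π) π := by
          refine h0.mono_of_mem_nhdsWithin ?_
          rw [mem_nhdsWithin]
          exact ⟨Set.Ioi 0, isOpen_Ioi, hπ, fun y hy => hsub ⟨hy.1, hy.2⟩⟩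
        exact h1.congr (fun y hy => hGg y hy) (hGg π le_rfl)
      have hright : HasDerivWithinAt G (g' π) (Set.Ici π) π := by
        have h1 : HasDerivAt (fun t : ℝ => g π + g' π * (t - π)) (g' π) π := by
          simpa using (((hasDerivAt_id π).sub_const π).const_mul (g' π)).const_add (g π)
        refine h1.hasDerivWithinAt.congr (fun y hy => ?_) ?_
        · simp only [hGdef]
          rw [if_neg (not_lt.mpr (show π ≤ y from hy))]
        · simp [hGdef]
      have h2 := hleft.union hright
      rw [Set.Iic_union_Ici] at h2
      exact hasDerivWithinAt_univ.mp h2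
  have hg't : ∀ t ∈ Set.Ioc 0 π, g' t = deriv G t := fun t ht => ((hG t ht).deriv).symm
  have hbound' : ∀ t ∈ Set.Ioc 0 π, |g' t| ≤ C * t ^ (-α) := by
    intro t ht
    have := hbound t (hsub ht)
    rwa [abs_of_pos ht.1] at this
  set B := |g π| with hBdef
  set D := C / (α - 1) with hDdef
  have hα1' : (0:ℝ) < α - 1 := by linarith
  have hα2' : (0:ℝ) < 2 - α := by linarith
  have hD0 : 0 < D := div_pos hC hα1'
  have hB0 : 0 ≤ B := abs_nonneg _
  -- interval integrability of g' on [a, π]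
  have hg'int : ∀ a, 0 < a → a ≤ π → IntervalIntegrable g' volume a π := by
    intro a ha haπ
    have hmeas : AEStronglyMeasurable g' (volume.restrict (Set.uIoc a π)) := by
      refine (measurable_deriv G).aestronglyMeasurable.congr ?_
      filter_upwards [ae_restrict_mem measurableSet_uIoc] with t ht
      rw [Set.uIoc_of_le haπ] at ht
      exact (hg't t ⟨ha.trans ht.1, ht.2⟩).symm
    refine IntervalIntegrable.mono_fun
      (intervalIntegrable_const (c := C * a ^ (-α))) hmeas ?_
    filter_upwards [ae_restrict_mem measurableSet_uIoc] with t ht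
    rw [Set.uIoc_of_le haπ] at ht
    have ht' : t ∈ Set.Ioc 0 π := ⟨ha.trans ht.1, ht.2⟩
    have h1 : |g' t| ≤ C * t ^ (-α) := hbound' t ht'
    have h2 : t ^ (-α) ≤ a ^ (-α) :=
      Real.rpow_le_rpow_of_nonpos ha ht.1.le (by linarith)
    have h3 : C * t ^ (-α) ≤ C * a ^ (-α) := by nlinarith
    rw [Real.norm_eq_abs, Real.norm_eq_abs]
    exact (h1.trans h3).trans (le_abs_self _)
  -- the key pointwise bound on g
  have hgbound : ∀ ω ∈ Set.Ioc 0 π, |g ω| ≤ B + D * ω ^ (1 - α) := by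
    intro ω hω
    have hFTC : ∫ t in ω..π, g' t = g π - g ω := by
      have h1 : ∫ t in ω..π, g' t = G π - G ω := by
        refine intervalIntegral.integral_eq_sub_of_hasDerivAt (fun t ht => ?_)
          (hg'int ω hω.1 hω.2)
        rw [Set.uIcc_of_le hω.2] at ht
        exact hG t ⟨hω.1.trans_le ht.1, ht.2⟩
      rw [h1, hGg π le_rfl, hGg ω hω.2]
    have hπω : (0:ℝ) ≤ π ^ (1-α) := Real.rpow_nonneg hπ.le _
    have habs : |∫ t in ω..π, g' t| ≤ D * ω ^ (1 - α) := by
      have hb : |∫ t in ω..π, g' t| ≤ |∫ t in ω..π, C * t ^ (-α)| := by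
        rw [← Real.norm_eq_abs]
        refine intervalIntegral.norm_integral_le_abs_of_norm_le ?_ ?_
        · filter_upwards [ae_restrict_mem measurableSet_uIoc] with t ht
          rw [Set.uIoc_of_le hω.2] at ht
          rw [Real.norm_eq_abs]
          exact hbound' t ⟨hω.1.trans ht.1, ht.2⟩
        · exact (intervalIntegral.intervalIntegrable_rpow
            (Or.inr (by rw [Set.uIcc_of_le hω.2]; rintro ⟨h0, -⟩; linarith [hω.1]))).const_mul C
      have hval : ∫ t in ω..π, C * t ^ (-α) = C * ((ω ^ (1-α) - π ^ (1-α)) / (α-1)) := by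
        rw [intervalIntegral.integral_const_mul, integral_rpow]
        · congr 1
          have h1 : -α + 1 = 1 - α := by ring
          rw [h1]
          have hne : (1:ℝ) - α ≠ 0 := by
            intro h; rw [sub_eq_zero] at h; exact absurd h.symm (ne_of_gt hα1)
          field_simp
          ring
        · exact Or.inr ⟨by linarith, by rw [Set.uIcc_of_le hω.2]; rintro ⟨h0, -⟩; linarith [hω.1]⟩
      rw [hval] at hb
      refine hb.trans ?_
      have hple : (0:ℝ) ≤ ω ^ (1-α) - π ^ (1-α) := by
        have := Real.rpow_le_rpow_of_nonpos hω.1 hω.2 (show 1-α ≤ 0 by linarith)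
        linarith
      rw [abs_of_nonneg (mul_nonneg hC.le (div_nonneg hple hα1'.le))]
      rw [hDdef, div_mul_eq_mul_div, mul_div_assoc]
      gcongr
      linarith
    have hgeq : g ω = g π - ∫ t in ω..π, g' t := by rw [hFTC]; ring
    calc |g ω| = |g π - ∫ t in ω..π, g' t| := by rw [← hgeq]
      _ ≤ |g π| + |∫ t in ω..π, g' t| := abs_sub _ _
      _ ≤ B + D * ω ^ (1-α) := by rw [hBdef]; linarith
  have hgcont : ContinuousOn g (Set.Ioc 0 π) := fun t ht =>
    ((hderiv t (hsub ht)).continuousWithinAt).mono hsub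
  refine ⟨6*B + 2*(D/(2-α)) + 4*D, by positivity, 1, ?_⟩
  intro x hx
  have hx0 : (0:ℝ) < x := by linarith
  have hxne : x ≠ 0 := ne_of_gt hx0
  set f : ℝ → ℝ := fun ω => Real.cos (ω * x) * g ω with hfdef
  set ε : ℝ := x⁻¹ with hεdef
  have hεpos : 0 < ε := inv_pos.mpr hx0
  have hε1 : ε ≤ 1 := by
    have h1 : x⁻¹ * x = 1 := inv_mul_cancel₀ hxne
    have h2 : (0:ℝ) < x⁻¹ := inv_pos.mpr hx0
    rw [hεdef]; nlinarith
  have hεπ : ε ≤ π := hε1.trans hπ1.le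
  have hεI : ε ∈ Set.Ioc 0 π := ⟨hεpos, hεπ⟩
  set P : ℝ := x ^ (-(2-α)) with hPdef
  have hP0 : 0 < P := Real.rpow_pos_of_pos hx0 _
  have hP1 : ε ^ (2-α) = P := by
    rw [hεdef, Real.inv_rpow hx0.le, ← Real.rpow_neg hx0.le, hPdef]
  have hP2 : x⁻¹ ≤ P := by
    rw [← Real.rpow_neg_one x, hPdef]
    exact Real.rpow_le_rpow_of_exponent_le hx (by linarith)
  have hP3 : ε ^ (1-α) = x ^ (α-1) := by
    rw [hεdef, Real.inv_rpow hx0.le, ← Real.rpow_neg hx0.le]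
    congr 1; ring
  have hP4 : x⁻¹ * x ^ (α-1) = P := by
    rw [← Real.rpow_neg_one x, ← Real.rpow_add hx0, hPdef]
    congr 1; ring
  have hbint : IntervalIntegrable (fun ω => B + D * ω ^ (1-α)) volume 0 π :=
    (intervalIntegrable_const (c := B)).add
      ((intervalIntegral.intervalIntegrable_rpow' (by linarith)).const_mul D)
  have hfmeas : AEStronglyMeasurable f (volume.restrict (Set.uIoc 0 π)) := by
    rw [Set.uIoc_of_le hπ.le]
    refine ContinuousOn.aestronglyMeasurable ?_ measurableSet_Ioc
    exact (Real.continuous_cos.comp (continuous_id.mul continuous_const)).continuousOn.mul hgcont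
  have hfle : ∀ t ∈ Set.Ioc 0 π, ‖f t‖ ≤ B + D * t ^ (1-α) := by
    intro t ht
    rw [Real.norm_eq_abs, hfdef]
    simp only []
    rw [abs_mul]
    have h1 : |Real.cos (t*x)| ≤ 1 := Real.abs_cos_le_one _
    have h2 := hgbound t ht
    have h3 : (0:ℝ) ≤ |g t| := abs_nonneg _
    have h4 : (0:ℝ) ≤ |Real.cos (t*x)| := abs_nonneg _
    nlinarith
  have hfint : IntervalIntegrable f volume 0 π := by
    refine hbint.mono_fun' hfmeas ?_
    filter_upwards [ae_restrict_mem measurableSet_uIoc] with t ht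
    rw [Set.uIoc_of_le hπ.le] at ht
    exact hfle t ht
  have hfeq : Set.EqOn (fun ω => f (-ω)) f (Set.uIcc 0 π) := by
    intro t ht
    rw [Set.uIcc_of_le hπ.le] at ht
    simp only [hfdef]
    rw [neg_mul, Real.cos_neg, heven t ⟨by linarith [ht.1], ht.2⟩]
  have haeeq : f =ᵐ[volume.restrict (Set.uIoc 0 π)] (fun ω => f (-ω)) := by
    filter_upwards [ae_restrict_mem measurableSet_uIoc] with t ht
    rw [Set.uIoc_of_le hπ.le] at ht
    exact (hfeq (by rw [Set.uIcc_of_le hπ.le]; exact Set.Ioc_subset_Icc_self ht)).symm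
  have hnegint : IntervalIntegrable f volume (-π) 0 := by
    have h1 : IntervalIntegrable (fun ω => f (-ω)) volume 0 π :=
      hfint.mono_fun (hfmeas.congr haeeq) (haeeq.mono fun t h => le_of_eq (congrArg (‖·‖) h.symm))
    have h2 := (IntervalIntegrable.iff_comp_neg (by simp)).mp h1
    simp only [neg_neg, neg_zero] at h2
    exact h2.symm
  have hIeq : ∫ ω in (-π)..(0:ℝ), f ω = ∫ ω in (0:ℝ)..π, f ω := by
    have h3 := intervalIntegral.integral_comp_neg (a := (0:ℝ)) (b := π) f
    rw [neg_zero] at h3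
    rw [← h3]
    exact intervalIntegral.integral_congr hfeq
  have hsplit : ∫ ω in (-π)..π, f ω = 2 * ∫ ω in (0:ℝ)..π, f ω := by
    rw [← intervalIntegral.integral_add_adjacent_intervals hnegint hfint, hIeq]; ring
  have hf0ε : IntervalIntegrable f volume 0 ε := hfint.mono_set
    (by rw [Set.uIcc_of_le hεpos.le, Set.uIcc_of_le hπ.le]; exact Set.Icc_subset_Icc le_rfl hεπ)
  have hfεπ : IntervalIntegrable f volume ε π := hfint.mono_set
    (by rw [Set.uIcc_of_le hεπ, Set.uIcc_of_le hπ.le]; exact Set.Icc_subset_Icc hεpos.le le_rfl)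
  have hsplit2 : ∫ ω in (0:ℝ)..π, f ω = (∫ ω in (0:ℝ)..ε, f ω) + ∫ ω in ε..π, f ω :=
    (intervalIntegral.integral_add_adjacent_intervals hf0ε hfεπ).symm
  -- T1 : the piece near zero
  have hT1 : |∫ ω in (0:ℝ)..ε, f ω| ≤ (B + D/(2-α)) * P := by
    have hb1 : |∫ ω in (0:ℝ)..ε, f ω| ≤ |∫ ω in (0:ℝ)..ε, (B + D * ω ^ (1-α))| := by
      rw [← Real.norm_eq_abs]
      refine intervalIntegral.norm_integral_le_abs_of_norm_le ?_ (hbint.mono_set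
        (by rw [Set.uIcc_of_le hεpos.le, Set.uIcc_of_le hπ.le]; exact Set.Icc_subset_Icc le_rfl hεπ))
      filter_upwards [ae_restrict_mem measurableSet_uIoc] with t ht
      rw [Set.uIoc_of_le hεpos.le] at ht
      exact hfle t ⟨ht.1, ht.2.trans hεπ⟩
    have hval : ∫ ω in (0:ℝ)..ε, (B + D * ω ^ (1-α)) = B * ε + D * (ε ^ (2-α) / (2-α)) := by
      rw [intervalIntegral.integral_add (intervalIntegrable_const (c := B))
        ((intervalIntegral.intervalIntegrable_rpow' (by linarith)).const_mul D),
        intervalIntegral.integral_const, intervalIntegral.integral_const_mul,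
        integral_rpow (Or.inl (by linarith : (-1:ℝ) < 1-α))]
      rw [Real.zero_rpow (by intro h; rw [show (1:ℝ)-α+1 = 2-α by ring] at h; linarith), show (1:ℝ)-α+1 = 2-α by ring]
      simp [smul_eq_mul]
      ring
    rw [hval, hP1] at hb1
    have h6 : (0:ℝ) ≤ B * ε + D * (P / (2-α)) := by positivity
    rw [abs_of_nonneg h6] at hb1
    have h7 : B * ε ≤ B * P := by
      rw [hεdef]; exact mul_le_mul_of_nonneg_left hP2 hB0
    calc |∫ ω in (0:ℝ)..ε, f ω| ≤ B * ε + D * (P / (2-α)) := hb1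
      _ ≤ B * P + D * (P / (2-α)) := by linarith
      _ = (B + D/(2-α)) * P := by ring
  -- T2 : integration by parts on [ε, π]
  set v : ℝ → ℝ := fun ω => Real.sin (ω*x) / x with hvdef
  have hv : ∀ ω : ℝ, HasDerivAt v (Real.cos (ω*x)) ω := by
    intro ω
    have h1 : HasDerivAt (fun ω : ℝ => ω * x) x ω := hasDerivAt_mul_const x
    have h2 : HasDerivAt (fun ω : ℝ => Real.sin (ω*x)) (Real.cos (ω*x) * x) ω :=
      h1.sin
    have h3 := h2.div_const x
    rw [mul_div_cancel_right₀ _ hxne] at h3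
    exact h3
  have hvb : ∀ ω : ℝ, |v ω| ≤ x⁻¹ := by
    intro ω
    rw [hvdef]
    simp only []
    rw [abs_div, abs_of_pos hx0, ← one_div]
    gcongr
    exact abs_le.mpr ⟨Real.neg_one_le_sin _, Real.sin_le_one _⟩
  have hIBP : ∫ ω in ε..π, G ω * Real.cos (ω*x) =
      G π * v π - G ε * v ε - ∫ ω in ε..π, g' ω * v ω := by
    refine intervalIntegral.integral_mul_deriv_eq_deriv_mul (fun t ht => ?_)
      (fun t _ => hv t) (hg'int ε hεpos hεπ) ?_
    · rw [Set.uIcc_of_le hεπ] at ht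
      exact hG t ⟨hεpos.trans_le ht.1, ht.2⟩
    · exact (Real.continuous_cos.comp (continuous_id.mul continuous_const)).intervalIntegrable _ _
  have heqfG : ∫ ω in ε..π, f ω = ∫ ω in ε..π, G ω * Real.cos (ω*x) := by
    refine intervalIntegral.integral_congr fun t ht => ?_
    rw [Set.uIcc_of_le hεπ] at ht
    simp only [hfdef]
    rw [hGg t ht.2]; ring
  have hI2 : |∫ ω in ε..π, g' ω * v ω| ≤ D * P := by
    have hb2 : |∫ ω in ε..π, g' ω * v ω| ≤ |∫ ω in ε..π, C * ω ^ (-α) * x⁻¹| := by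
      rw [← Real.norm_eq_abs]
      refine intervalIntegral.norm_integral_le_abs_of_norm_le ?_ ?_
      · filter_upwards [ae_restrict_mem measurableSet_uIoc] with t ht
        rw [Set.uIoc_of_le hεπ] at ht
        rw [Real.norm_eq_abs, abs_mul]
        have h1 := hbound' t ⟨hεpos.trans ht.1, ht.2⟩
        have h2 := hvb t
        have h3 : (0:ℝ) ≤ |g' t| := abs_nonneg _
        have h4 : (0:ℝ) ≤ |v t| := abs_nonneg _
        have h5 : (0:ℝ) ≤ C * t ^ (-α) := h3.trans h1
        nlinarith
      · exact ((intervalIntegral.intervalIntegrable_rpow (Or.inr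
          (by rw [Set.uIcc_of_le hεπ]; rintro ⟨h0,-⟩; linarith))).const_mul C).mul_const x⁻¹
    have hval2 : ∫ ω in ε..π, C * ω ^ (-α) * x⁻¹
        = C * x⁻¹ * ((π ^ (1-α) - ε ^ (1-α))/(1-α)) := by
      rw [intervalIntegral.integral_mul_const, intervalIntegral.integral_const_mul,
        integral_rpow (Or.inr ⟨by linarith,
          by rw [Set.uIcc_of_le hεπ]; rintro ⟨h0,-⟩; linarith⟩)]
      rw [show -α + 1 = 1-α by ring]
      ring
    rw [hval2] at hb2
    refine hb2.trans ?_
    have hple : (0:ℝ) ≤ ε ^ (1-α) - π ^ (1-α) := by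
      have := Real.rpow_le_rpow_of_nonpos hεpos hεπ (show 1-α ≤ 0 by linarith)
      linarith
    have hne : (1:ℝ) - α ≠ 0 := by
      intro h; rw [sub_eq_zero] at h; exact absurd h.symm (ne_of_gt hα1)
    have heq3 : C * x⁻¹ * ((π ^ (1-α) - ε ^ (1-α))/(1-α))
        = C * x⁻¹ * ((ε ^ (1-α) - π ^ (1-α))/(α-1)) := by
      congr 1
      rw [show (1:ℝ)-α = -(α-1) by ring, div_neg, ← neg_div, neg_sub]
    rw [heq3]
    have h8 : (0:ℝ) < x⁻¹ := inv_pos.mpr hx0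
    rw [abs_of_nonneg (mul_nonneg (mul_nonneg hC.le h8.le) (div_nonneg hple hα1'.le))]
    calc C * x⁻¹ * ((ε ^ (1-α) - π ^ (1-α))/(α-1)) ≤ C * x⁻¹ * (ε ^ (1-α)/(α-1)) := by
          gcongr
          linarith [Real.rpow_nonneg hπ.le (1-α)]
      _ = D * (x⁻¹ * x ^ (α-1)) := by rw [hP3, hDdef]; ring
      _ = D * P := by rw [hP4]
  have hT2 : |∫ ω in ε..π, f ω| ≤ (2*B + 2*D) * P := by
    rw [heqfG, hIBP]
    have h1 : |G π * v π| ≤ B * x⁻¹ := by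
      rw [abs_mul, hGg π le_rfl, ← hBdef]
      exact mul_le_mul_of_nonneg_left (hvb π) hB0
    have h2 : |G ε * v ε| ≤ (B + D * x ^ (α-1)) * x⁻¹ := by
      rw [abs_mul, hGg ε hεπ]
      have h2a := hgbound ε hεI
      rw [hP3] at h2a
      exact mul_le_mul h2a (hvb ε) (abs_nonneg _) (by positivity)
    have habs3 : |G π * v π - G ε * v ε - ∫ ω in ε..π, g' ω * v ω|
        ≤ |G π * v π| + |G ε * v ε| + |∫ ω in ε..π, g' ω * v ω| := by
      refine (abs_sub _ _).trans ?_
      have := abs_sub (G π * v π) (G ε * v ε)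
      linarith
    have h5 : D * x ^ (α-1) * x⁻¹ = D * P := by rw [← hP4]; ring
    have h6 : B * x⁻¹ ≤ B * P := mul_le_mul_of_nonneg_left hP2 hB0
    have h8 : (0:ℝ) < x⁻¹ := inv_pos.mpr hx0
    calc |G π * v π - G ε * v ε - ∫ ω in ε..π, g' ω * v ω|
        ≤ |G π * v π| + |G ε * v ε| + |∫ ω in ε..π, g' ω * v ω| := habs3
      _ ≤ B * x⁻¹ + (B + D * x ^ (α-1)) * x⁻¹ + D * P := by linarith [hI2]
      _ = B * x⁻¹ + B * x⁻¹ + D * x ^ (α-1) * x⁻¹ + D * P := by ring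
      _ = B * x⁻¹ + B * x⁻¹ + D * P + D * P := by rw [h5]
      _ ≤ (2*B + 2*D) * P := by nlinarith
  show |∫ ω in (-π)..π, f ω| ≤ (6*B + 2*(D/(2-α)) + 4*D) * P
  rw [hsplit, hsplit2]
  calc |2 * ((∫ ω in (0:ℝ)..ε, f ω) + ∫ ω in ε..π, f ω)|
      = 2 * |(∫ ω in (0:ℝ)..ε, f ω) + ∫ ω in ε..π, f ω| := by
        rw [abs_mul]; norm_num
    _ ≤ 2 * (|∫ ω in (0:ℝ)..ε, f ω| + |∫ ω in ε..π, f ω|) := by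
        have := abs_add_le (∫ ω in (0:ℝ)..ε, f ω) (∫ ω in ε..π, f ω)
        linarith
    _ ≤ 2 * ((B + D/(2-α)) * P + (2*B + 2*D) * P) := by linarith
    _ = (6*B + 2*(D/(2-α)) + 4*D) * P := by ring
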